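/- For every positive integer m, the number of reverse alternating permutations of [2m] with exactly m+1 fixed points equals D_{m-1}, the number of derangements of [m-1]. -/
import Mathlib


/-- `π` is an alternating permutation: `π 1 > π 2 < π 3 > π 4 < ⋯`
(here stated with 0-indexed positions). -/
def IsAlternating {n : ℕ} (π : Equiv.Perm (Fin n)) : Prop :=
  ∀ i : ℕ, ∀ h : i + 1 < n,
    if i % 2 = 0 then π ⟨i + 1, h⟩ < π ⟨i, Nat.lt_of_succ_lt h⟩
    else π ⟨i, Nat.lt_of_succ_lt h⟩ < π ⟨i + 1, h⟩

/-- `π` is a reverse alternating permutation: `π 1 < π 2 > π 3 < π 4 > ⋯`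
(here stated with 0-indexed positions). -/
def IsRevAlternating {n : ℕ} (π : Equiv.Perm (Fin n)) : Prop :=
  ∀ i : ℕ, ∀ h : i + 1 < n,
    if i % 2 = 0 then π ⟨i, Nat.lt_of_succ_lt h⟩ < π ⟨i + 1, h⟩
    else π ⟨i + 1, h⟩ < π ⟨i, Nat.lt_of_succ_lt h⟩

/-- The number of fixed points of a permutation of `Fin n`. -/
def fixedPointCount {n : ℕ} (π : Equiv.Perm (Fin n)) : ℕ :=
  (Finset.univ.filter fun i => π i = i).card

namespace RevAltAux

open Equiv Finset

variable {k : ℕ}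

/-- The non-fixed position of pair `a` determined by a derangement `σ`. -/
def sFun (σ : Equiv.Perm (Fin k)) (a : Fin k) : Fin (2*(k+1)) :=
  if (a : ℕ) < (σ a : ℕ) then ⟨2*(a:ℕ)+1, by have := a.isLt; omega⟩
  else ⟨2*(a:ℕ)+2, by have := a.isLt; omega⟩

lemma sFun_lb (σ : Equiv.Perm (Fin k)) (a : Fin k) : 2*(a:ℕ)+1 ≤ (sFun σ a : ℕ) := by
  unfold sFun; split <;> simp

lemma sFun_ub (σ : Equiv.Perm (Fin k)) (a : Fin k) : (sFun σ a : ℕ) ≤ 2*(a:ℕ)+2 := by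
  unfold sFun; split <;> simp

lemma sFun_pos (σ : Equiv.Perm (Fin k)) (a : Fin k) (h : (a:ℕ) < (σ a : ℕ)) :
    (sFun σ a : ℕ) = 2*(a:ℕ)+1 := by unfold sFun; rw [if_pos h]

lemma sFun_neg (σ : Equiv.Perm (Fin k)) (a : Fin k) (h : ¬ (a:ℕ) < (σ a : ℕ)) :
    (sFun σ a : ℕ) = 2*(a:ℕ)+2 := by unfold sFun; rw [if_neg h]

lemma sFun_injective (σ : Equiv.Perm (Fin k)) : Function.Injective (sFun σ) := by
  intro a b h
  have ha1 := sFun_lb σ a; have ha2 := sFun_ub σ a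
  have hb1 := sFun_lb σ b; have hb2 := sFun_ub σ b
  rw [h] at ha1 ha2
  have : (a:ℕ) = (b:ℕ) := by omega
  exact Fin.ext this

/-- The reverse alternating permutation associated to a derangement. -/
noncomputable def Phi (σ : Equiv.Perm (Fin k)) : Equiv.Perm (Fin (2*(k+1))) :=
  σ.viaEmbedding ⟨sFun σ, sFun_injective σ⟩

lemma Phi_apply (σ : Equiv.Perm (Fin k)) (a : Fin k) :
    Phi σ (sFun σ a) = sFun σ (σ a) :=
  σ.viaEmbedding_apply ⟨sFun σ, sFun_injective σ⟩ a

lemma Phi_apply_of_ne (σ : Equiv.Perm (Fin k)) (j : Fin (2*(k+1)))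
    (h : ∀ a, sFun σ a ≠ j) : Phi σ j = j := by
  refine σ.viaEmbedding_apply_of_notMem ⟨sFun σ, sFun_injective σ⟩ j ?_
  rintro ⟨a, ha⟩; exact h a ha

/-- Value analysis at odd positions `2a+1`. -/
lemma phi_odd (σ : Equiv.Perm (Fin k)) (a : ℕ) (h : 2*a+1 < 2*(k+1)) :
    ((Phi σ) ⟨2*a+1, h⟩ : ℕ) = 2*a+1 ∨ 2*a+3 ≤ ((Phi σ) ⟨2*a+1, h⟩ : ℕ) := by
  by_cases ha : ∃ hk : a < k, ((⟨a, hk⟩ : Fin k) : ℕ) < (σ ⟨a, hk⟩ : ℕ)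
  · obtain ⟨hk, hlt⟩ := ha
    have hs : sFun σ ⟨a, hk⟩ = ⟨2*a+1, h⟩ := Fin.ext (sFun_pos σ ⟨a, hk⟩ hlt)
    rw [← hs, Phi_apply]
    right
    have h1 := sFun_lb σ (σ ⟨a, hk⟩)
    have h2 : ((⟨a, hk⟩ : Fin k) : ℕ) = a := rfl
    omega
  · left
    have : Phi σ ⟨2*a+1, h⟩ = ⟨2*a+1, h⟩ := by
      apply Phi_apply_of_ne
      intro b hb
      have hb1 := sFun_lb σ b; have hb2 := sFun_ub σ b
      rw [hb] at hb1 hb2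
      simp only [Fin.val] at hb1 hb2  -- noop maybe
      have hval : (sFun σ b : ℕ) = 2*a+1 := by rw [hb]
      have hba : (b:ℕ) = a := by omega
      have hbpos : (b:ℕ) < (σ b : ℕ) := by
        by_contra hc
        have := sFun_neg σ b hc
        omega
      exact ha ⟨hba ▸ b.isLt, by
        have : (⟨a, hba ▸ b.isLt⟩ : Fin k) = b := Fin.ext hba.symm
        rw [this]; exact hbpos⟩
    rw [this]

/-- Value analysis at even positions `2a`. -/
lemma phi_even (σ : Equiv.Perm (Fin k)) (hσ : ∀ x, σ x ≠ x) (a : ℕ) (h : 2*a < 2*(k+1)) :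
    ((Phi σ) ⟨2*a, h⟩ : ℕ) = 2*a ∨ ((Phi σ) ⟨2*a, h⟩ : ℕ) + 2 ≤ 2*a := by
  by_cases ha : ∃ b : Fin k, (b:ℕ) = a - 1 ∧ 1 ≤ a ∧ (σ b : ℕ) < (b:ℕ)
  · obtain ⟨b, hb, h1, hlt⟩ := ha
    have hs : sFun σ b = ⟨2*a, h⟩ := Fin.ext (by
      rw [sFun_neg σ b (by omega)]; show 2*(b:ℕ)+2 = 2*a; omega)
    rw [← hs, Phi_apply]
    right
    have h2 := sFun_ub σ (σ b)
    omega
  · left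
    have : Phi σ ⟨2*a, h⟩ = ⟨2*a, h⟩ := by
      apply Phi_apply_of_ne
      intro b hb
      have hb1 := sFun_lb σ b; have hb2 := sFun_ub σ b
      have hval : (sFun σ b : ℕ) = 2*a := by rw [hb]
      have hba : (b:ℕ) = a - 1 ∧ 1 ≤ a := by omega
      have hbneg : ¬ (b:ℕ) < (σ b : ℕ) := by
        intro hc
        have := sFun_pos σ b hc
        omega
      have hne : (σ b : ℕ) ≠ (b:ℕ) := fun hc => hσ b (Fin.ext hc)
      exact ha ⟨b, hba.1, hba.2, by omega⟩
    rw [this]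

/-- Correlated value analysis at a pair, for derangements. -/
lemma phi_pair (σ : Equiv.Perm (Fin k)) (hσ : ∀ x, σ x ≠ x) (b : Fin k)
    (h1 : 2*(b:ℕ)+1 < 2*(k+1)) (h2 : 2*(b:ℕ)+2 < 2*(k+1)) :
    (2*(b:ℕ)+3 ≤ ((Phi σ) ⟨2*(b:ℕ)+1, h1⟩ : ℕ) ∧ ((Phi σ) ⟨2*(b:ℕ)+2, h2⟩ : ℕ) = 2*(b:ℕ)+2) ∨
    (((Phi σ) ⟨2*(b:ℕ)+1, h1⟩ : ℕ) = 2*(b:ℕ)+1 ∧ ((Phi σ) ⟨2*(b:ℕ)+2, h2⟩ : ℕ) ≤ 2*(b:ℕ)) := by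
  have hne : (σ b : ℕ) ≠ (b:ℕ) := fun hc => hσ b (Fin.ext hc)
  by_cases hlt : (b:ℕ) < (σ b : ℕ)
  · left
    constructor
    · have hs : sFun σ b = ⟨2*(b:ℕ)+1, h1⟩ := Fin.ext (sFun_pos σ b hlt)
      rw [← hs, Phi_apply]
      have := sFun_lb σ (σ b); omega
    · have : Phi σ ⟨2*(b:ℕ)+2, h2⟩ = ⟨2*(b:ℕ)+2, h2⟩ := by
        apply Phi_apply_of_ne
        intro c hc
        have hc1 := sFun_lb σ c; have hc2 := sFun_ub σ c
        have hval : (sFun σ c : ℕ) = 2*(b:ℕ)+2 := by rw [hc]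
        have hcb : (c:ℕ) = (b:ℕ) := by omega
        have : c = b := Fin.ext hcb
        subst this
        have := sFun_pos σ c hlt
        omega
      rw [this]
  · right
    have hgt : (σ b : ℕ) < (b:ℕ) := by omega
    constructor
    · have : Phi σ ⟨2*(b:ℕ)+1, h1⟩ = ⟨2*(b:ℕ)+1, h1⟩ := by
        apply Phi_apply_of_ne
        intro c hc
        have hc1 := sFun_lb σ c; have hc2 := sFun_ub σ c
        have hval : (sFun σ c : ℕ) = 2*(b:ℕ)+1 := by rw [hc]
        have hcb : (c:ℕ) = (b:ℕ) := by omega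
        have : c = b := Fin.ext hcb
        subst this
        by_cases hcc : (c:ℕ) < (σ c : ℕ)
        · exact hlt hcc
        · have := sFun_neg σ c hcc; omega
      rw [this]
    · have hs : sFun σ b = ⟨2*(b:ℕ)+2, h2⟩ := Fin.ext (sFun_neg σ b hlt)
      rw [← hs, Phi_apply]
      have := sFun_ub σ (σ b); omega

lemma Phi_alternating (σ : Equiv.Perm (Fin k)) (hσ : ∀ x, σ x ≠ x) :
    IsRevAlternating (Phi σ) := by
  intro i h
  obtain ⟨a, rfl | rfl⟩ := Nat.even_or_odd' i
  · rw [if_pos (by omega)]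
    rw [Fin.lt_def]
    have hodd := phi_odd σ a (by omega : 2*a+1 < 2*(k+1))
    have heven := phi_even σ hσ a (by omega : 2*a < 2*(k+1))
    have e1 : (⟨2*a+1, h⟩ : Fin (2*(k+1))) = ⟨2*a+1, by omega⟩ := rfl
    rw [e1]
    omega
  · rw [if_neg (by omega)]
    rw [Fin.lt_def]
    have hbk : a < k := by omega
    have hp := phi_pair σ hσ ⟨a, hbk⟩ (by simpa using (by omega : 2*a+1 < 2*(k+1)))
      (by simpa using (by omega : 2*a+2 < 2*(k+1)))
    simp only [Fin.val_mk] at hp  -- coercion of ⟨a, hbk⟩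
    have e1 : (⟨2*a+1+1, h⟩ : Fin (2*(k+1))) = ⟨2*a+2, by omega⟩ := rfl
    have e2 : (⟨2*a+1, Nat.lt_of_succ_lt h⟩ : Fin (2*(k+1))) = ⟨2*a+1, by omega⟩ := rfl
    rw [e1, e2]
    omega

lemma Phi_moved (σ : Equiv.Perm (Fin k)) (hσ : ∀ x, σ x ≠ x) :
    Finset.univ.filter (fun j => Phi σ j ≠ j) = Finset.image (sFun σ) Finset.univ := by
  ext j
  simp only [mem_filter, mem_univ, true_and, mem_image]
  constructor
  · intro hj
    by_contra hc
    push_neg at hc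
    exact hj (Phi_apply_of_ne σ j hc)
  · rintro ⟨a, _, rfl⟩
    rw [Phi_apply]
    intro hc
    exact hσ a (sFun_injective σ hc)

lemma Phi_fixedPointCount (σ : Equiv.Perm (Fin k)) (hσ : ∀ x, σ x ≠ x) :
    fixedPointCount (Phi σ) = k + 2 := by
  have h1 := Finset.card_filter_add_card_filter_not
    (s := (Finset.univ : Finset (Fin (2*(k+1))))) (p := fun j => Phi σ j = j)
  have h2 : (Finset.univ.filter (fun j => ¬ Phi σ j = j)).card = k := by
    have hm := Phi_moved σ hσ
    simp only [ne_eq] at hm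
    rw [hm, Finset.card_image_of_injective _ (sFun_injective σ)]
    simp
  have h3 : (Finset.univ : Finset (Fin (2*(k+1)))).card = 2*(k+1) := by simp
  unfold fixedPointCount
  omega

lemma Phi_injective (σ₁ σ₂ : Equiv.Perm (Fin k)) (hσ₁ : ∀ x, σ₁ x ≠ x)
    (hσ₂ : ∀ x, σ₂ x ≠ x) (h : Phi σ₁ = Phi σ₂) : σ₁ = σ₂ := by
  -- first, the branch conditions agree
  have hcond : ∀ b : Fin k, ((b:ℕ) < (σ₁ b : ℕ) ↔ (b:ℕ) < (σ₂ b : ℕ)) := by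
    have key : ∀ (τ₁ τ₂ : Equiv.Perm (Fin k)), (∀ x, τ₁ x ≠ x) → (∀ x, τ₂ x ≠ x) →
        Phi τ₁ = Phi τ₂ → ∀ b : Fin k, (b:ℕ) < (τ₁ b : ℕ) → (b:ℕ) < (τ₂ b : ℕ) := by
      intro τ₁ τ₂ h1 h2 heq b hb
      by_contra hc
      -- then j1 b not in range of sFun τ₂, so Phi τ₂ fixes it, but Phi τ₁ moves it
      have hfix : Phi τ₂ (sFun τ₁ b) = sFun τ₁ b := by
        apply Phi_apply_of_ne
        intro c hcc
        have hc1 := sFun_lb τ₂ c; have hc2 := sFun_ub τ₂ c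
        have hval : (sFun τ₂ c : ℕ) = (sFun τ₁ b : ℕ) := by rw [hcc]
        have hv1 : (sFun τ₁ b : ℕ) = 2*(b:ℕ)+1 := sFun_pos τ₁ b hb
        have hcb : (c:ℕ) = (b:ℕ) := by omega
        have : c = b := Fin.ext hcb
        subst this
        by_cases hx : (c:ℕ) < (τ₂ c : ℕ)
        · exact hc hx
        · have := sFun_neg τ₂ c hx; omega
      have hmove : Phi τ₁ (sFun τ₁ b) ≠ sFun τ₁ b := by
        rw [Phi_apply]
        intro hcc
        exact h1 b (sFun_injective τ₁ hcc)
      rw [heq] at hmove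
      exact hmove hfix
    intro b
    constructor
    · exact key σ₁ σ₂ hσ₁ hσ₂ h b
    · exact key σ₂ σ₁ hσ₂ hσ₁ h.symm b
  have hs : sFun σ₁ = sFun σ₂ := by
    funext b
    apply Fin.ext
    by_cases hb : (b:ℕ) < (σ₁ b : ℕ)
    · rw [sFun_pos σ₁ b hb, sFun_pos σ₂ b ((hcond b).1 hb)]
    · rw [sFun_neg σ₁ b hb, sFun_neg σ₂ b (fun hc => hb ((hcond b).2 hc))]
  ext b
  have : Phi σ₁ (sFun σ₁ b) = Phi σ₂ (sFun σ₂ b) := by rw [h, hs]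
  rw [Phi_apply, Phi_apply, hs] at this
  have := sFun_injective σ₂ this
  rw [this]

lemma Phi_surjective (π : Equiv.Perm (Fin (2*(k+1)))) (halt : IsRevAlternating π)
    (hfix : fixedPointCount π = k + 2) :
    ∃ σ : Equiv.Perm (Fin k), (∀ x, σ x ≠ x) ∧ Phi σ = π := by
  classical
  set N : Finset (Fin (2*(k+1))) := Finset.univ.filter (fun j => π j ≠ j) with hN
  have hNcard : N.card = k := by
    have h1 := Finset.card_filter_add_card_filter_not
      (s := (Finset.univ : Finset (Fin (2*(k+1))))) (p := fun j => π j = j)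
    have h3 : (Finset.univ : Finset (Fin (2*(k+1)))).card = 2*(k+1) := by simp
    unfold fixedPointCount at hfix
    have : N.card = (Finset.univ.filter (fun j => ¬ π j = j)).card := rfl
    omega
  -- pair positions
  have hj1lt : ∀ b : Fin k, 2*(b:ℕ)+1 < 2*(k+1) := fun b => by have := b.isLt; omega
  have hj2lt : ∀ b : Fin k, 2*(b:ℕ)+2 < 2*(k+1) := fun b => by have := b.isLt; omega
  set j1 : Fin k → Fin (2*(k+1)) := fun b => ⟨2*(b:ℕ)+1, hj1lt b⟩ with hj1
  set j2 : Fin k → Fin (2*(k+1)) := fun b => ⟨2*(b:ℕ)+2, hj2lt b⟩ with hj2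
  have hpairalt : ∀ b : Fin k, (π (j2 b) : ℕ) < (π (j1 b) : ℕ) := by
    intro b
    have := halt (2*(b:ℕ)+1) (hj2lt b)
    rw [if_neg (by omega)] at this
    rw [Fin.lt_def] at this
    exact this
  have hpair : ∀ b : Fin k, π (j1 b) ≠ j1 b ∨ π (j2 b) ≠ j2 b := by
    intro b
    by_contra hcc
    push_neg at hcc
    have := hpairalt b
    rw [hcc.1, hcc.2] at this
    simp only [j1, j2] at this
    omega
  set f : Fin k → Fin (2*(k+1)) := fun b => if π (j1 b) = j1 b then j2 b else j1 b with hf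
  have hfval : ∀ b : Fin k, 2*(b:ℕ)+1 ≤ (f b : ℕ) ∧ (f b : ℕ) ≤ 2*(b:ℕ)+2 := by
    intro b; simp only [hf]; split <;> simp [j1, j2]
  have hfN : ∀ b, f b ∈ N := by
    intro b
    simp only [hN, mem_filter, mem_univ, true_and]
    simp only [hf]
    split
    · rcases hpair b with h' | h'
      · exact absurd ‹π (j1 b) = j1 b› h'
      · exact h'
    · assumption
  have hfinj : Function.Injective f := by
    intro a b hab
    have ha := hfval a; have hb := hfval b
    rw [hab] at ha
    exact Fin.ext (by omega)
  have himage : Finset.image f Finset.univ = N := by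
    apply Finset.eq_of_subset_of_card_le
    · intro j hj
      rw [Finset.mem_image] at hj
      obtain ⟨b, _, rfl⟩ := hj
      exact hfN b
    · rw [Finset.card_image_of_injective _ hfinj]
      simp [hNcard]
  have hmem : ∀ j, j ∈ N ↔ ∃ b, f b = j := by
    intro j
    rw [← himage, Finset.mem_image]
    constructor
    · rintro ⟨b, _, rfl⟩; exact ⟨b, rfl⟩
    · rintro ⟨b, rfl⟩; exact ⟨b, mem_univ b, rfl⟩
  have hπN : ∀ j, π j ∈ N ↔ j ∈ N := by
    intro j
    simp only [hN, mem_filter, mem_univ, true_and]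
    constructor
    · intro hj hc; exact hj (by rw [hc]; exact hc)
    · intro hj hc; exact hj (π.injective hc)
  have hex : ∀ b, ∃ c, f c = π (f b) := fun b => (hmem _).1 ((hπN _).2 (hfN b))
  choose g hg using hex
  have hginj : Function.Injective g := by
    intro a b hab
    apply hfinj
    apply π.injective
    rw [← hg a, ← hg b, hab]
  have hgbij : Function.Bijective g := Finite.injective_iff_bijective.mp hginj
  refine ⟨Equiv.ofBijective g hgbij, ?_, ?_⟩
  · intro b hc
    have hb : g b = b := hc
    have : f b = π (f b) := by rw [← hg b, hb]
    have hm := hfN b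
    simp only [hN, mem_filter, mem_univ, true_and] at hm
    exact hm this.symm
  · -- Phi σ = π; first show f = sFun σ
    set σ := Equiv.ofBijective g hgbij with hσdef
    have hσg : ∀ b, σ b = g b := fun b => rfl
    have hfs : ∀ b, f b = sFun σ b := by
      intro b
      have hfg := hg b  -- f (g b) = π (f b)
      have hgv := hfval (g b)
      by_cases hb : π (j1 b) = j1 b
      · -- f b = j2 b and g b < b
        have hfb : f b = j2 b := by simp only [hf]; rw [if_pos hb]
        have hπj2 : π (j2 b) = f (g b) := by rw [hg b, hfb]
        have halt2 := hpairalt b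
        rw [hb, hπj2] at halt2
        simp only [j1] at halt2
        -- (f (g b)).val < 2b+1, so g b < b
        have hglt : ((g b : Fin k) : ℕ) < (b:ℕ) := by omega
        have : ¬ (b:ℕ) < (σ b : ℕ) := by rw [hσg]; omega
        rw [hfb]
        apply Fin.ext
        rw [sFun_neg σ b this]
      · -- f b = j1 b, π fixes j2 b, and b < g b
        have hfb : f b = j1 b := by simp only [hf]; rw [if_neg hb]
        have hπj2 : π (j2 b) = j2 b := by
          by_contra hc
          have : j2 b ∈ N := by simp only [hN, mem_filter, mem_univ, true_and]; exact hc
          obtain ⟨c, hcf⟩ := (hmem _).1 this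
          have hcv := hfval c
          rw [hcf] at hcv
          simp only [j2] at hcv
          have : (c:ℕ) = (b:ℕ) := by omega
          have hcb : c = b := Fin.ext this
          rw [hcb, hfb] at hcf
          have := congrArg Fin.val hcf
          simp only [j1, j2] at this
          omega
        have hπj1 : π (j1 b) = f (g b) := by rw [hg b, hfb]
        have halt2 := hpairalt b
        rw [hπj2, hπj1] at halt2
        simp only [j2] at halt2
        have hglt : (b:ℕ) < ((g b : Fin k) : ℕ) := by omega
        have hblt : (b:ℕ) < (σ b : ℕ) := by rw [hσg]; omega
        rw [hfb]
        apply Fin.ext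
        rw [sFun_pos σ b hblt]
    apply Equiv.ext
    intro j
    by_cases hj : j ∈ N
    · obtain ⟨b, rfl⟩ := (hmem j).1 hj
      rw [hfs b, Phi_apply, ← hfs (σ b), hσg, hg b, hfs b]
    · have hπj : π j = j := by
        simp only [hN, mem_filter, mem_univ, true_and] at hj
        push_neg at hj
        exact hj
      rw [hπj]
      apply Phi_apply_of_ne
      intro a ha
      apply hj
      rw [← ha, ← hfs a]
      exact hfN a

end RevAltAux

/-- For every positive integer `m`, the number of reverse alternating permutations of `[2m]`
with exactly `m+1` fixed points equals `D_{m-1}`. -/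
theorem reverse_alternating_even_count (m : ℕ) (hm : 1 ≤ m) :
    Nat.card {π : Equiv.Perm (Fin (2 * m)) // IsRevAlternating π ∧ fixedPointCount π = m + 1} =
      numDerangements (m - 1) := by
  obtain ⟨k, rfl⟩ : ∃ k, m = k + 1 := ⟨m - 1, (Nat.succ_pred_eq_of_pos hm).symm⟩
  have hm1 : k + 1 - 1 = k := rfl
  rw [hm1]
  have e : (derangements (Fin k)) ≃
      {π : Equiv.Perm (Fin (2 * (k+1))) // IsRevAlternating π ∧ fixedPointCount π = (k+1) + 1} := by
    refine Equiv.ofBijective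
      (fun σ => ⟨RevAltAux.Phi σ.1, RevAltAux.Phi_alternating σ.1 σ.2,
        RevAltAux.Phi_fixedPointCount σ.1 σ.2⟩) ⟨?_, ?_⟩
    · rintro ⟨σ₁, h₁⟩ ⟨σ₂, h₂⟩ h
      have := congrArg Subtype.val h
      simp only at this
      exact Subtype.ext (RevAltAux.Phi_injective σ₁ σ₂ h₁ h₂ this)
    · rintro ⟨π, h1, h2⟩
      obtain ⟨σ, hder, hPhi⟩ := RevAltAux.Phi_surjective π h1 h2
      exact ⟨⟨σ, hder⟩, Subtype.ext hPhi⟩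
  rw [← Nat.card_congr e, Nat.card_eq_fintype_card, card_derangements_fin_eq_numDerangements]
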